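/- Let t₀ ∈ ℂ∖{0,1}. Let q₁, q₂, P₁, P₂ be holomorphic functions on a neighborhood of t₀ with (q₁(t₀), q₂(t₀), P₁(t₀), P₂(t₀)) = (0, t₀, 0, 0), which satisfy on that neighborhood equation (E3) of the W₀₁-system together with the denominator-cleared forms of (E1), (E2) and (E4) (each obtained by multiplying both sides by P₁). Then q₁′(t₀) = (α₃+α₅−η)/(t₀−1), q₂′(t₀) = 1 − α₄/2, P₁′(t₀) = 1/(t₀−1), and P₂′(t₀) = −α₃/(t₀(t₀−1)). -/

import Mathlib

/-- A holomorphic solution of the `W₀₁`-system (in the denominator-cleared form)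
through the point `(0, t₀, 0, 0)` of the accessible singularity `P₃^{(01)}`
satisfies `q₁′(t₀) = (α₃+α₅−η)/(t₀−1)`, `q₂′(t₀) = 1 − α₄/2`,
`P₁′(t₀) = 1/(t₀−1)` and `P₂′(t₀) = −α₃/(t₀(t₀−1))`. -/
theorem leading_coefficients_at_P3_01
    (α₀ α₁ α₂ α₃ α₄ α₅ η : ℂ) (hsum : α₀ + α₁ + α₂ + α₃ + α₄ + α₅ = 1)
    (t₀ : ℂ) (ht₀0 : t₀ ≠ 0) (ht₀1 : t₀ ≠ 1)
    (U : Set ℂ) (hUopen : IsOpen U) (ht₀U : t₀ ∈ U)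
    (q₁ q₂ P₁ P₂ : ℂ → ℂ)
    (hq₁ : DifferentiableOn ℂ q₁ U) (hq₂ : DifferentiableOn ℂ q₂ U)
    (hP₁ : DifferentiableOn ℂ P₁ U) (hP₂ : DifferentiableOn ℂ P₂ U)
    (hinit₁ : q₁ t₀ = 0) (hinit₂ : q₂ t₀ = t₀) (hinit₃ : P₁ t₀ = 0) (hinit₄ : P₂ t₀ = 0)
    -- (E1), cleared of its denominator `P₁`
    (hE₁ : ∀ t ∈ U, t * (t - 1) * deriv q₁ t * P₁ t =
      ((α₁ + η) * (q₁ t) ^ 2 + α₃ * (q₁ t) * (q₂ t) +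
          ((α₀ + α₅ - η) * t - (α₀ + α₁ + η)) * (q₁ t) - α₃ * (q₂ t) - (α₅ - η) * t) *
        P₁ t +
        ((q₁ t - 1) * (q₁ t + q₂ t) * (q₂ t - t) * P₂ t +
          2 * (q₁ t) * (q₁ t - 1) * (q₁ t - t)))
    -- (E2), cleared of its denominator `P₁`
    (hE₂ : ∀ t ∈ U, t * (t - 1) * deriv q₂ t * P₁ t =
      (α₁ * (q₁ t) * (q₂ t) + (α₃ + η) * (q₂ t) ^ 2 - α₁ * t * (q₁ t) -
          ((α₃ + α₄ + η - 1) * t - (α₄ + α₅ - η - 1)) * (q₂ t) - (α₅ - η) * t) *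
        P₁ t +
        (2 * (q₂ t) * (q₂ t - 1) * (q₂ t - t) * P₂ t +
          (q₁ t - 1) * (q₁ t + q₂ t) * (q₂ t - t)))
    -- (E3)
    (hE₃ : ∀ t ∈ U, t * (t - 1) * deriv P₁ t =
      α₁ * η * (P₁ t) ^ 2 +
        (2 * (α₁ + η) * (q₁ t) + α₃ * (q₂ t) + (α₀ + α₅ - η) * t - (α₀ + α₁ + η)) *
          P₁ t +
        α₁ * (q₂ t - t) * P₁ t * P₂ t +
        (2 * (q₁ t) + q₂ t - 1) * (q₂ t - t) * P₂ t +
        3 * (q₁ t) ^ 2 - 2 * (t + 1) * (q₁ t) + t)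
    -- (E4), cleared of its denominator `P₁`
    (hE₄ : ∀ t ∈ U, t * (t - 1) * deriv P₂ t * P₁ t =
      (η * (α₁ * P₂ t - α₃) * P₁ t + α₁ * (q₂ t - t) * (P₂ t) ^ 2 +
          ((α₁ + 2 * η) * (q₁ t) - (α₃ + 2 * η) * (q₂ t) - (α₁ + α₂) * t + α₂ + α₃) *
            P₂ t -
          α₃ * (q₁ t - 1)) *
        P₁ t +
        ((2 * (q₁ t) * (q₂ t) - 2 * (q₂ t) ^ 2 - 2 * t * (q₁ t) + (t + 1) * (q₂ t)) *
            (P₂ t) ^ 2 +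
          (2 * (q₁ t) ^ 2 - 2 * (q₁ t) * (q₂ t) - (t + 1) * (q₁ t) + 2 * (q₂ t)) *
            P₂ t)) :
    deriv q₁ t₀ = (α₃ + α₅ - η) / (t₀ - 1) ∧ deriv q₂ t₀ = 1 - α₄ / 2 ∧
      deriv P₁ t₀ = 1 / (t₀ - 1) ∧ deriv P₂ t₀ = -α₃ / (t₀ * (t₀ - 1)) := by

  have hnhds : U ∈ nhds t₀ := hUopen.mem_nhds ht₀U
  have hq1' : HasDerivAt q₁ (deriv q₁ t₀) t₀ := (hq₁.differentiableAt hnhds).hasDerivAt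
  have hq2' : HasDerivAt q₂ (deriv q₂ t₀) t₀ := (hq₂.differentiableAt hnhds).hasDerivAt
  have hp1' : HasDerivAt P₁ (deriv P₁ t₀) t₀ := (hP₁.differentiableAt hnhds).hasDerivAt
  have hp2' : HasDerivAt P₂ (deriv P₂ t₀) t₀ := (hP₂.differentiableAt hnhds).hasDerivAt
  have hdq1 : HasDerivAt (deriv q₁) (deriv (deriv q₁) t₀) t₀ :=
    (((hq₁.analyticOnNhd hUopen).deriv t₀ ht₀U).differentiableAt).hasDerivAt
  have hdq2 : HasDerivAt (deriv q₂) (deriv (deriv q₂) t₀) t₀ :=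
    (((hq₂.analyticOnNhd hUopen).deriv t₀ ht₀U).differentiableAt).hasDerivAt
  have hdp2 : HasDerivAt (deriv P₂) (deriv (deriv P₂) t₀) t₀ :=
    (((hP₂.analyticOnNhd hUopen).deriv t₀ ht₀U).differentiableAt).hasDerivAt
  have hid : HasDerivAt (fun t : ℂ => t) 1 t₀ := hasDerivAt_id' t₀
  have ht₀1' : t₀ - 1 ≠ 0 := sub_ne_zero.mpr ht₀1
  -- (E3) at t₀ gives P₁′(t₀)
  have hc : deriv P₁ t₀ = 1 / (t₀ - 1) := by
    have h := hE₃ t₀ ht₀U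
    rw [hinit₁, hinit₂, hinit₃, hinit₄] at h
    rw [eq_div_iff ht₀1']
    exact mul_left_cancel₀ ht₀0 (by linear_combination h)
  -- differentiate (E1)
  have heq1 : (fun t => t * (t - 1) * deriv q₁ t * P₁ t) =ᶠ[nhds t₀]
      (fun t => ((α₁ + η) * (q₁ t) ^ 2 + α₃ * (q₁ t) * (q₂ t) +
          ((α₀ + α₅ - η) * t - (α₀ + α₁ + η)) * (q₁ t) - α₃ * (q₂ t) - (α₅ - η) * t) * P₁ t +
        ((q₁ t - 1) * (q₁ t + q₂ t) * (q₂ t - t) * P₂ t + 2 * (q₁ t) * (q₁ t - 1) * (q₁ t - t))) := by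
    filter_upwards [hnhds] with t ht using hE₁ t ht
  have hL1 := (((hid.mul (hid.sub_const 1)).mul hdq1).mul hp1').deriv
  have hR1 := ((((((((hq1'.pow 2).const_mul (α₁+η)).add ((hq1'.const_mul α₃).mul hq2')).add
      ((((hid.const_mul (α₀+α₅-η)).sub_const (α₀+α₁+η))).mul hq1')).sub (hq2'.const_mul α₃)).sub
      (hid.const_mul (α₅-η))).mul hp1').add
      (((((hq1'.sub_const 1).mul (hq1'.add hq2')).mul (hq2'.sub hid)).mul hp2').add
        (((hq1'.const_mul 2).mul (hq1'.sub_const 1)).mul (hq1'.sub hid)))).deriv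
  have key1 := (hL1.symm.trans heq1.deriv_eq).trans hR1
  simp only [Pi.mul_apply, Pi.add_apply, Pi.sub_apply, Pi.pow_apply, hinit₁, hinit₂, hinit₃, hinit₄, hc] at key1
  refine ⟨?_, ?_, hc, ?_⟩
  · rw [eq_div_iff ht₀1']
    field_simp at key1
    exact mul_left_cancel₀ ht₀0 (by linear_combination -key1)
  · -- differentiate (E2)
    have heq2 : (fun t => t * (t - 1) * deriv q₂ t * P₁ t) =ᶠ[nhds t₀]
        (fun t => (α₁ * (q₁ t) * (q₂ t) + (α₃ + η) * (q₂ t) ^ 2 - α₁ * t * (q₁ t) -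
            ((α₃ + α₄ + η - 1) * t - (α₄ + α₅ - η - 1)) * (q₂ t) - (α₅ - η) * t) * P₁ t +
          (2 * (q₂ t) * (q₂ t - 1) * (q₂ t - t) * P₂ t +
            (q₁ t - 1) * (q₁ t + q₂ t) * (q₂ t - t))) := by
      filter_upwards [hnhds] with t ht using hE₂ t ht
    have hL2 := (((hid.mul (hid.sub_const 1)).mul hdq2).mul hp1').deriv
    have hR2 := ((((((((hq1'.const_mul α₁).mul hq2').add ((hq2'.pow 2).const_mul (α₃+η))).sub
        ((hid.const_mul α₁).mul hq1')).sub
        (((hid.const_mul (α₃+α₄+η-1)).sub_const (α₄+α₅-η-1)).mul hq2')).sub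
        (hid.const_mul (α₅-η))).mul hp1').add
        (((((hq2'.const_mul 2).mul (hq2'.sub_const 1)).mul (hq2'.sub hid)).mul hp2').add
          (((hq1'.sub_const 1).mul (hq1'.add hq2')).mul (hq2'.sub hid)))).deriv
    have key2 := (hL2.symm.trans heq2.deriv_eq).trans hR2
    simp only [Pi.mul_apply, Pi.add_apply, Pi.sub_apply, Pi.pow_apply, hinit₁, hinit₂, hinit₃, hinit₄, hc] at key2
    field_simp at key2
    exact mul_left_cancel₀ (mul_ne_zero ht₀0 ht₀1') (by linear_combination key2 / 2)
  · -- differentiate (E4)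
    have heq4 : (fun t => t * (t - 1) * deriv P₂ t * P₁ t) =ᶠ[nhds t₀]
        (fun t => (η * (α₁ * P₂ t - α₃) * P₁ t + α₁ * (q₂ t - t) * (P₂ t) ^ 2 +
            ((α₁ + 2 * η) * (q₁ t) - (α₃ + 2 * η) * (q₂ t) - (α₁ + α₂) * t + α₂ + α₃) * P₂ t -
            α₃ * (q₁ t - 1)) * P₁ t +
          ((2 * (q₁ t) * (q₂ t) - 2 * (q₂ t) ^ 2 - 2 * t * (q₁ t) + (t + 1) * (q₂ t)) * (P₂ t) ^ 2 +
            (2 * (q₁ t) ^ 2 - 2 * (q₁ t) * (q₂ t) - (t + 1) * (q₁ t) + 2 * (q₂ t)) * P₂ t)) := by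
      filter_upwards [hnhds] with t ht using hE₄ t ht
    have hL4 := (((hid.mul (hid.sub_const 1)).mul hdp2).mul hp1').deriv
    have hR4 := ((((((((hp2'.const_mul α₁).sub_const α₃).const_mul η).mul hp1').add
        (((hq2'.sub hid).const_mul α₁).mul (hp2'.pow 2))).add
        ((((((hq1'.const_mul (α₁+2*η)).sub (hq2'.const_mul (α₃+2*η))).sub
          (hid.const_mul (α₁+α₂))).add_const α₂).add_const α₃).mul hp2')).sub
        ((hq1'.sub_const 1).const_mul α₃)).mul hp1').add
        (((((((hq1'.const_mul 2).mul hq2').sub ((hq2'.pow 2).const_mul 2)).sub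
          ((hid.const_mul 2).mul hq1')).add ((hid.add_const 1).mul hq2')).mul (hp2'.pow 2)).add
        ((((((hq1'.pow 2).const_mul 2).sub ((hq1'.const_mul 2).mul hq2')).sub
          ((hid.add_const 1).mul hq1')).add (hq2'.const_mul 2)).mul hp2'))
    have key4 := (hL4.symm.trans heq4.deriv_eq).trans hR4.deriv
    simp only [Pi.mul_apply, Pi.add_apply, Pi.sub_apply, Pi.pow_apply, hinit₁, hinit₂, hinit₃, hinit₄, hc] at key4
    field_simp at key4
    rw [eq_div_iff (mul_ne_zero ht₀0 ht₀1')]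
    linear_combination -key4
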